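/- Let H be a group, Z ≤ Z(H) a central subgroup of prime order p, and P a p-subgroup of H containing Z. Then the index of C_H(P)/Z in C_{H/Z}(P/Z) is at most |P/Φ(P)|, where Φ(P) is the Frattini subgroup of P. -/

import Mathlib

lemma aux_isCoatom_of_index_prime {G : Type*} [Group G] {p : ℕ} (hp : p.Prime)
    {K : Subgroup G} (h : K.index = p) : IsCoatom K := by
  constructor
  · intro ht
    rw [ht, Subgroup.index_top] at h
    exact hp.one_lt.ne h
  · intro K' hlt
    have hd : K'.index ∣ K.index := Subgroup.index_dvd_of_le hlt.le
    rw [h] at hd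
    rcases hp.eq_one_or_self_of_dvd _ hd with h1 | hpeq
    · exact Subgroup.index_eq_one.mp h1
    · exfalso
      have hm := Subgroup.relIndex_mul_index hlt.le
      rw [h, hpeq] at hm
      have h1 : K.relIndex K' = 1 :=
        Nat.eq_of_mul_eq_mul_right hp.pos (hm.trans (one_mul p).symm)
      exact hlt.not_ge (Subgroup.relIndex_eq_one.mp h1)

/-- Key counting lemma: if `Z` is a commutative-looking group of prime order `p` (given as a
subgroup of the center), then the number of homomorphisms `P →* Z` is at most the index of the
Frattini subgroup of `P`. -/
lemma aux_card_hom_le {p : ℕ} (hp : p.Prime) {H : Type*} [Group H]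
    (Z : Subgroup H) (hZ : Z ≤ Subgroup.center H) (hZcard : Nat.card Z = p)
    (P : Subgroup H) [Finite ↥P] :
    Nat.card (↥P →* ↥Z) ≤ (frattini ↥P).index := by
  classical
  haveI : Fact p.Prime := ⟨hp⟩
  haveI : Finite ↥Z := Nat.finite_of_card_ne_zero (by rw [hZcard]; exact hp.ne_zero)
  have hZcomm : ∀ a b : ↥Z, a * b = b * a := fun a b =>
    Subtype.ext (Subgroup.mem_center_iff.mp (hZ b.2) a)
  -- the intersection of all kernels of homs to Z
  set N : Subgroup ↥P := ⨅ (f : ↥P →* ↥Z), f.ker with hNdef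
  haveI hNnormal : N.Normal := by
    constructor
    intro n hn g
    rw [hNdef, Subgroup.mem_iInf] at hn ⊢
    intro f
    have : f n = 1 := hn f
    simp [MonoidHom.mem_ker, map_mul, this]
  -- the quotient is a commutative group
  letI cg : CommGroup (↥P ⧸ N) :=
    { (inferInstance : Group (↥P ⧸ N)) with
      mul_comm := by
        intro a b
        induction a using QuotientGroup.induction_on with
        | H x =>
        induction b using QuotientGroup.induction_on with
        | H y =>
        rw [← QuotientGroup.mk_mul, ← QuotientGroup.mk_mul]
        apply (QuotientGroup.eq (s := N)).mpr
        rw [hNdef, Subgroup.mem_iInf]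
        intro f
        rw [MonoidHom.mem_ker, map_mul, map_inv, map_mul, map_mul, hZcomm (f x) (f y)]
        exact inv_mul_cancel _ }
  haveI : NeZero ((Monoid.exponent (↥P ⧸ N) : ℂ)) :=
    ⟨Nat.cast_ne_zero.mpr Monoid.exponent_ne_zero_of_finite⟩
  -- an injective hom from Z to ℂˣ
  haveI : IsSimpleGroup ↥Z := isSimpleGroup_of_prime_card hZcard
  haveI : Nontrivial ↥Z := Finite.one_lt_card_iff_nontrivial.mp (by rw [hZcard]; exact hp.one_lt)
  letI cgZ : CommGroup ↥Z := { (inferInstance : Group ↥Z) with mul_comm := hZcomm }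
  haveI : NeZero ((Monoid.exponent ↥Z : ℂ)) :=
    ⟨Nat.cast_ne_zero.mpr Monoid.exponent_ne_zero_of_finite⟩
  obtain ⟨a, ha⟩ := exists_ne (1 : ↥Z)
  obtain ⟨φ, hφ⟩ := CommGroup.exists_apply_ne_one_of_hasEnoughRootsOfUnity ↥Z ℂ ha
  have hφinj : Function.Injective φ := by
    rw [← MonoidHom.ker_eq_bot_iff]
    rcases Subgroup.Normal.eq_bot_or_eq_top (inferInstance : φ.ker.Normal) with h | h
    · exact h
    · exact absurd (by simp [← MonoidHom.mem_ker, h] : φ a = 1) hφ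
  -- step 1 : Hom(P, Z) injects into Hom(P/N, Z)
  haveI : Finite ((↥P ⧸ N) →* ↥Z) :=
    Finite.of_injective (fun f => (f : (↥P ⧸ N) → ↥Z)) DFunLike.coe_injective
  have step1 : Nat.card (↥P →* ↥Z) ≤ Nat.card ((↥P ⧸ N) →* ↥Z) := by
    have : Function.Injective
        (fun f : ↥P →* ↥Z => QuotientGroup.lift N f (hNdef ▸ iInf_le _ f)) := by
      intro f g hfg
      ext x
      have := DFunLike.congr_fun hfg (QuotientGroup.mk (s := N) x)
      simpa using this
    exact Nat.card_le_card_of_injective _ this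
  -- step 2 : Hom(P/N, Z) injects into Hom(P/N, ℂˣ)
  obtain ⟨e⟩ := CommGroup.monoidHom_mulEquiv_of_hasEnoughRootsOfUnity (↥P ⧸ N) ℂ
  haveI : Finite ((↥P ⧸ N) →* ℂˣ) := Finite.of_equiv _ e.toEquiv.symm
  have step2 : Nat.card ((↥P ⧸ N) →* ↥Z) ≤ Nat.card ((↥P ⧸ N) →* ℂˣ) := by
    have : Function.Injective (fun g : (↥P ⧸ N) →* ↥Z => φ.comp g) := by
      intro f g hfg
      exact (MonoidHom.cancel_left hφinj).mp hfg
    exact Nat.card_le_card_of_injective _ this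
  -- step 3 : card Hom(P/N, ℂˣ) = card (P/N) = N.index
  have step3 : Nat.card ((↥P ⧸ N) →* ℂˣ) = N.index := Nat.card_congr e.toEquiv
  -- step 4 : frattini ≤ N hence N.index ≤ frattini.index
  have hfr : frattini ↥P ≤ N := by
    rw [hNdef]
    apply le_iInf
    intro f
    rcases eq_or_ne f.ker ⊤ with h | h
    · rw [h]; exact le_top
    · apply frattini_le_coatom
      apply aux_isCoatom_of_index_prime hp
      rw [Subgroup.index_ker]
      have hdvd : Nat.card f.range ∣ p := hZcard ▸ Subgroup.card_subgroup_dvd_card f.range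
      rcases hp.eq_one_or_self_of_dvd _ hdvd with h1 | hpe
      · exfalso
        apply h
        apply Subgroup.index_eq_one.mp
        rw [Subgroup.index_ker, h1]
      · exact hpe
  have step4 : N.index ≤ (frattini ↥P).index := by
    refine Nat.le_of_dvd ?_ (Subgroup.index_dvd_of_le hfr)
    exact Nat.pos_of_ne_zero Subgroup.index_ne_zero_of_finite
  calc Nat.card (↥P →* ↥Z) ≤ Nat.card ((↥P ⧸ N) →* ↥Z) := step1
    _ ≤ Nat.card ((↥P ⧸ N) →* ℂˣ) := step2
    _ = N.index := step3
    _ ≤ (frattini ↥P).index := step4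

/-- Let `H` be a group, `Z ≤ Z(H)` of prime order `p`, and `P` a (finite) `p`-subgroup of `H`
containing `Z`.  Then the index of `C_H(P)/Z` in `C_{H/Z}(P/Z)` is finite and at most
`|P/Φ(P)|`, where `Φ(P)` is the Frattini subgroup of `P`. -/
theorem stmt_19 (p : ℕ) (hp : p.Prime) (H : Type*) [Group H]
    (Z : Subgroup H) [Z.Normal] (hZ : Z ≤ Subgroup.center H) (hZcard : Nat.card Z = p)
    (P : Subgroup H) [Finite P] (hP : IsPGroup p P) (hZP : Z ≤ P) :
    0 < Subgroup.relIndex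
        ((Subgroup.centralizer (P : Set H)).map (QuotientGroup.mk' Z))
        (Subgroup.centralizer ((P.map (QuotientGroup.mk' Z)) : Set (H ⧸ Z))) ∧
      Subgroup.relIndex
        ((Subgroup.centralizer (P : Set H)).map (QuotientGroup.mk' Z))
        (Subgroup.centralizer ((P.map (QuotientGroup.mk' Z)) : Set (H ⧸ Z)))
      ≤ (frattini ↥P).index := by
  classical
  haveI : Finite ↥Z := Nat.finite_of_card_ne_zero (by rw [hZcard]; exact hp.ne_zero)
  set C : Subgroup H := Subgroup.centralizer (P : Set H) with hCdef
  set A : Subgroup (H ⧸ Z) := C.map (QuotientGroup.mk' Z) with hAdef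
  set B : Subgroup (H ⧸ Z) :=
    Subgroup.centralizer ((P.map (QuotientGroup.mk' Z)) : Set (H ⧸ Z)) with hBdef
  set A' : Subgroup ↥B := A.subgroupOf B with hA'def
  -- commutators of elements of B-representatives with P land in Z
  have comm_mem : ∀ h : H, (QuotientGroup.mk h : H ⧸ Z) ∈ B → ∀ x : ↥P,
      h * x * h⁻¹ * (x : H)⁻¹ ∈ Z := by
    intro h hhB x
    rw [← QuotientGroup.eq_one_iff]
    have hx : (QuotientGroup.mk (x : H) : H ⧸ Z) ∈ P.map (QuotientGroup.mk' Z) :=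
      ⟨(x : H), x.2, rfl⟩
    have hcomm := Subgroup.mem_centralizer_iff.mp hhB _ hx
    set c : H ⧸ Z := QuotientGroup.mk h
    set d : H ⧸ Z := QuotientGroup.mk (x : H)
    have : (QuotientGroup.mk (h * x * h⁻¹ * (x : H)⁻¹) : H ⧸ Z) = c * d * c⁻¹ * d⁻¹ := by
      simp [c, d, QuotientGroup.mk_mul, QuotientGroup.mk_inv]
    rw [this, mul_inv_eq_one, mul_inv_eq_iff_eq_mul]
    exact hcomm.symm
  -- the homomorphism P →* Z attached to an element of B
  have FmulZ : ∀ (h : H), (QuotientGroup.mk h : H ⧸ Z) ∈ B → ∀ x y : ↥P,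
      h * ((x : H) * y) * h⁻¹ * ((x : H) * y)⁻¹ =
        (h * x * h⁻¹ * (x : H)⁻¹) * (h * y * h⁻¹ * (y : H)⁻¹) := by
    intro h hhB x y
    have hzmem : h * y * h⁻¹ * (y : H)⁻¹ ∈ Z := comm_mem h hhB y
    have hzc := Subgroup.mem_center_iff.mp (hZ hzmem) ((x : H))⁻¹
    calc h * ((x : H) * y) * h⁻¹ * ((x : H) * y)⁻¹
        = h * x * h⁻¹ * ((h * y * h⁻¹ * (y : H)⁻¹) * (x : H)⁻¹) := by group
      _ = h * x * h⁻¹ * ((x : H)⁻¹ * (h * y * h⁻¹ * (y : H)⁻¹)) := by rw [← hzc]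
      _ = (h * x * h⁻¹ * (x : H)⁻¹) * (h * y * h⁻¹ * (y : H)⁻¹) := by group
  let F : ↥B → (↥P →* ↥Z) := fun b =>
    { toFun := fun x => ⟨(b : H ⧸ Z).out * x * ((b : H ⧸ Z).out)⁻¹ * (x : H)⁻¹,
        comm_mem _ (by rw [QuotientGroup.out_eq']; exact b.2) x⟩
      map_one' := by
        ext
        simp
      map_mul' := by
        intro x y
        ext
        exact FmulZ _ (by rw [QuotientGroup.out_eq']; exact b.2) x y }
  -- F is constant on left cosets of A'
  have Fconst : ∀ b b' : ↥B, b⁻¹ * b' ∈ A' → F b = F b' := by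
    intro b b' hmem
    rw [hA'def, Subgroup.mem_subgroupOf] at hmem
    obtain ⟨c, hcC, hc⟩ := hmem
    set h : H := (b : H ⧸ Z).out with hh
    set h' : H := (b' : H ⧸ Z).out with hh'
    have hmkeq : (QuotientGroup.mk c : H ⧸ Z) = QuotientGroup.mk (h⁻¹ * h') := by
      rw [QuotientGroup.mk_mul, QuotientGroup.mk_inv, hh, hh',
        QuotientGroup.out_eq', QuotientGroup.out_eq']
      exact hc
    have hzZ : c⁻¹ * (h⁻¹ * h') ∈ Z := QuotientGroup.eq.mp hmkeq
    set z : H := c⁻¹ * (h⁻¹ * h') with hz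
    have he1 : h' = h * c * z := by rw [hz]; group
    ext x
    show h * x * h⁻¹ * (x : H)⁻¹ = h' * x * h'⁻¹ * (x : H)⁻¹
    have hzx : z * x = (x : H) * z := (Subgroup.mem_center_iff.mp (hZ hzZ) x).symm
    have hcx : (x : H) * c = c * x := Subgroup.mem_centralizer_iff.mp hcC _ x.2
    have hz2 : z * (x : H) * z⁻¹ = x := by rw [hzx, mul_inv_cancel_right]
    have hc2 : c * (x : H) * c⁻¹ = x := by rw [← hcx, mul_inv_cancel_right]
    rw [he1]
    calc h * x * h⁻¹ * (x : H)⁻¹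
        = h * (c * (z * x * z⁻¹) * c⁻¹) * h⁻¹ * (x : H)⁻¹ := by rw [hz2, hc2]
      _ = h * c * z * x * (h * c * z)⁻¹ * (x : H)⁻¹ := by group
  -- hence F descends to the quotient
  let Fbar : (↥B ⧸ A') → (↥P →* ↥Z) := fun q =>
    Quotient.liftOn' q F fun a b hab => Fconst a b (QuotientGroup.leftRel_apply.mp hab)
  have Finj : Function.Injective Fbar := by
    intro q q'
    induction q using QuotientGroup.induction_on with
    | H b =>
    induction q' using QuotientGroup.induction_on with
    | H b' =>
    intro hFF
    have hFF' : F b = F b' := hFF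
    apply (QuotientGroup.eq (s := A')).mpr
    rw [hA'def, Subgroup.mem_subgroupOf]
    set h : H := (b : H ⧸ Z).out with hh
    set h' : H := (b' : H ⧸ Z).out with hh'
    refine ⟨h⁻¹ * h', ?_, ?_⟩
    · show h⁻¹ * h' ∈ C
      rw [hCdef, Subgroup.mem_centralizer_iff]
      intro s hs
      have hx := Subtype.ext_iff.mp (DFunLike.congr_fun hFF' ⟨s, hs⟩)
      have E : h * s * h⁻¹ = h' * s * h'⁻¹ :=
        mul_right_cancel (hx : h * s * h⁻¹ * s⁻¹ = h' * s * h'⁻¹ * s⁻¹)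
      calc s * (h⁻¹ * h') = h⁻¹ * (h * s * h⁻¹) * h' := by group
        _ = h⁻¹ * (h' * s * h'⁻¹) * h' := by rw [E]
        _ = (h⁻¹ * h') * s := by group
    · show (QuotientGroup.mk (h⁻¹ * h') : H ⧸ Z) = ((b⁻¹ * b' : ↥B) : H ⧸ Z)
      rw [QuotientGroup.mk_mul, QuotientGroup.mk_inv, hh, hh',
        QuotientGroup.out_eq', QuotientGroup.out_eq']
      rfl
  haveI : Finite (↥P →* ↥Z) :=
    Finite.of_injective (fun f => (f : ↥P → ↥Z)) DFunLike.coe_injective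
  haveI : Finite (↥B ⧸ A') := Finite.of_injective Fbar Finj
  have hrel : A.relIndex B = Nat.card (↥B ⧸ A') := rfl
  constructor
  · rw [hrel]
    exact Nat.card_pos
  · rw [hrel]
    calc Nat.card (↥B ⧸ A') ≤ Nat.card (↥P →* ↥Z) := Nat.card_le_card_of_injective Fbar Finj
      _ ≤ (frattini ↥P).index := aux_card_hom_le hp Z hZ hZcard P
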